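/- (Lemma on the boundary points.) Fix an integer n ≥ 1, σ > 0, α, τ ∈ (0,1) with τ ≥ α and τ < 2Φ(−z_{α/2}/2) − α, and λ > 0 with √λ > z_{α/2}σ/√n. Then: (a) any solution c_1 > 0 of θ = √λ − z_{α/2}σ̃(θ)/√n satisfies c_1 ∈ ((z_{α/2} − z_{τ/2})σ/√n, √λ); (b) any solution c_2 > 0 of θ = √λ + z_{α/2}σ̃(θ)/√n satisfies c_2 ∈ (√λ + (1/2)z_{α/2}σ/√n, √λ + z_{α/2}σ/√n); (c) any solution c_3 > 0 of θ = √λ + z_{α/2}σ/√n − z_{α/2}σ̃(θ)/√n satisfies c_3 ∈ (√λ, √λ + (1/2)z_{α/2}σ/√n); (d) any solution c_4 > 0 of θ = √λ + z_{α/2}σ/√n + z_{α/2}σ̃(θ)/√n satisfies c_4 ∈ (√λ + (3/2)z_{α/2}σ/√n, √λ + 2z_{α/2}σ/√n). Moreover, any such solutions satisfy c_1 < c_3 < c_2 < c_4. -/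
import Mathlib


open MeasureTheory ProbabilityTheory

/-- The standard normal cumulative distribution function. -/
noncomputable def Phi (x : ℝ) : ℝ := (gaussianReal 0 1 (Set.Iic x)).toReal

/-- P_s(θ,ν) = Φ(√n(θ − ν)/σ) + Φ(√n(−θ − ν)/σ). -/
noncomputable def Ps (n : ℕ) (σ θ ν : ℝ) : ℝ :=
  Phi (Real.sqrt n * (θ - ν) / σ) + Phi (Real.sqrt n * (-θ - ν) / σ)

/-- σ̃(θ) = (1 + λ/θ²)⁻¹ σ for θ ≠ 0, with the convention σ̃(0) = 0. -/
noncomputable def sigTilde (lam σ θ : ℝ) : ℝ :=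
  if θ = 0 then 0 else (1 + lam / θ ^ 2)⁻¹ * σ

open Classical in
/-- The piecewise function CR_a(θ,ν); here `za` denotes the quantile z_{α/2}. -/
noncomputable def CRa (n : ℕ) (σ lam za θ ν : ℝ) : ℝ :=
  if θ < |ν - za * sigTilde lam σ θ / Real.sqrt n| then
    (Ps n σ θ ν - 2 * Phi (-(za * sigTilde lam σ θ / σ))) *
      (if ν < za * sigTilde lam σ θ / Real.sqrt n then 1 else 0)
  else if θ ≤ ν + za * sigTilde lam σ θ / Real.sqrt n then
    Phi (za * sigTilde lam σ θ / σ) - Phi (Real.sqrt n * (ν - θ) / σ)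
  else 1 - 2 * Phi (-(za * sigTilde lam σ θ / σ))

open Classical in
/-- The piecewise function CR_b(θ,ν); here `za` denotes the quantile z_{α/2}. -/
noncomputable def CRb (n : ℕ) (σ α za θ ν : ℝ) : ℝ :=
  if θ < |ν - za * σ / Real.sqrt n| then
    (Ps n σ θ ν - α) * (if ν < za * σ / Real.sqrt n then 1 else 0)
  else if θ ≤ ν + za * σ / Real.sqrt n then
    1 - α / 2 - Phi (Real.sqrt n * (ν - θ) / σ)
  else 1 - α

lemma Phi_mono : Monotone Phi := fun _ _ hxy =>
  ENNReal.toReal_mono (measure_ne_top _ _) (measure_mono (Set.Iic_subset_Iic.mpr hxy))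

lemma Phi_zero : Phi 0 = 1/2 := by
  have hmap : (gaussianReal (0:ℝ) 1).map (fun x => (-1 : ℝ) * x) = gaussianReal 0 1 := by
    have := gaussianReal_map_const_mul (μ := (0:ℝ)) (v := 1) (-1)
    simpa using this
  have hIci : gaussianReal (0:ℝ) 1 (Set.Ici 0) = gaussianReal (0:ℝ) 1 (Set.Iic 0) := by
    conv_lhs => rw [← hmap]
    rw [Measure.map_apply (by fun_prop) measurableSet_Ici]
    congr 1
    ext x
    simp only [Set.mem_preimage, Set.mem_Ici, Set.mem_Iic]
    constructor <;> intro h <;> nlinarith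
  have hsing : gaussianReal (0:ℝ) 1 ({0} : Set ℝ) = 0 :=
    gaussianReal_absolutelyContinuous 0 one_ne_zero (by simp)
  have hunion : gaussianReal (0:ℝ) 1 (Set.Iic 0) + gaussianReal (0:ℝ) 1 (Set.Ici 0)
      = gaussianReal (0:ℝ) 1 (Set.Iic 0 ∪ Set.Ici 0) + gaussianReal (0:ℝ) 1 (Set.Iic 0 ∩ Set.Ici 0) :=
    (measure_union_add_inter _ measurableSet_Ici).symm
  have huniv : (Set.Iic (0:ℝ) ∪ Set.Ici 0) = Set.univ := by
    ext x; simp [le_total x 0]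
  have hinter : (Set.Iic (0:ℝ) ∩ Set.Ici 0) = {0} := by
    ext x; simp [le_antisymm_iff, and_comm]
  rw [hIci, huniv, hinter, hsing, measure_univ, add_zero] at hunion
  have h2 : Phi 0 + Phi 0 = 1 := by
    rw [Phi, ← ENNReal.toReal_add (measure_ne_top _ _) (measure_ne_top _ _), hunion]
    simp
  linarith

lemma sigTilde_eq {lam σ θ : ℝ} (hlam : 0 < lam) (hθ : 0 < θ) :
    sigTilde lam σ θ = θ ^ 2 / (θ ^ 2 + lam) * σ := by
  have h2 : (0:ℝ) < θ ^ 2 := by positivity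
  rw [sigTilde, if_neg hθ.ne']
  congr 1
  rw [eq_div_iff (by positivity), inv_mul_eq_div, div_eq_iff (by positivity)]
  field_simp

lemma sigTilde_pos {lam σ θ : ℝ} (hσ : 0 < σ) (hlam : 0 < lam) (hθ : 0 < θ) :
    0 < sigTilde lam σ θ := by
  rw [sigTilde_eq hlam hθ]; positivity

lemma sigTilde_lt {lam σ θ : ℝ} (hσ : 0 < σ) (hlam : 0 < lam) (hθ : 0 < θ) :
    sigTilde lam σ θ < σ := by
  rw [sigTilde_eq hlam hθ]
  have h1 : θ ^ 2 / (θ ^ 2 + lam) < 1 := by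
    rw [div_lt_one (by positivity)]; linarith
  nlinarith

lemma sigTilde_gt_half {lam σ θ : ℝ} (hσ : 0 < σ) (hlam : 0 < lam)
    (hθ : Real.sqrt lam < θ) : σ / 2 < sigTilde lam σ θ := by
  have hθ0 : 0 < θ := lt_of_le_of_lt (Real.sqrt_nonneg lam) hθ
  have hl : lam < θ ^ 2 := by
    nlinarith [Real.sq_sqrt hlam.le, Real.sqrt_nonneg lam]
  rw [sigTilde_eq hlam hθ0]
  have h1 : (1:ℝ) / 2 < θ ^ 2 / (θ ^ 2 + lam) := by
    rw [div_lt_div_iff₀ (by norm_num) (by positivity)]; linarith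
  nlinarith

lemma sigTilde_le_bound {lam σ θ : ℝ} (hσ : 0 < σ) (hlam : 0 < lam) (hθ : 0 < θ) :
    sigTilde lam σ θ ≤ θ ^ 2 / lam * σ := by
  rw [sigTilde_eq hlam hθ]
  have h1 : θ ^ 2 / (θ ^ 2 + lam) ≤ θ ^ 2 / lam := by
    apply div_le_div_of_nonneg_left (by positivity) hlam
    linarith [sq_nonneg θ]
  nlinarith [sq_nonneg θ, div_nonneg (sq_nonneg θ) hlam.le]

/-- Lemma on the boundary points: under (C1) τ ≥ α,
(C2) τ < 2Φ(−z_{α/2}/2) − α and √λ > z_{α/2}σ/√n, the positive solutions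
c₁, c₂, c₃, c₄ of the four boundary equations lie in the stated intervals and are
ordered c₁ < c₃ < c₂ < c₄. -/
theorem boundary_points (n : ℕ) (hn : 1 ≤ n) (σ lam α τ za zt : ℝ)
    (hσ : 0 < σ) (hlam : 0 < lam)
    (hα : α ∈ Set.Ioo (0:ℝ) 1) (hτ : τ ∈ Set.Ioo (0:ℝ) 1)
    (hza : Phi (-za) = α / 2) (hzt : Phi (-zt) = τ / 2)
    (hC1 : α ≤ τ) (hC2 : τ < 2 * Phi (-(za / 2)) - α)
    (hlamLB : za * σ / Real.sqrt n < Real.sqrt lam) :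
    (∀ c₁ : ℝ, 0 < c₁ →
      c₁ = Real.sqrt lam - za * sigTilde lam σ c₁ / Real.sqrt n →
      c₁ ∈ Set.Ioo ((za - zt) * σ / Real.sqrt n) (Real.sqrt lam)) ∧
    (∀ c₂ : ℝ, 0 < c₂ →
      c₂ = Real.sqrt lam + za * sigTilde lam σ c₂ / Real.sqrt n →
      c₂ ∈ Set.Ioo (Real.sqrt lam + (1/2) * za * σ / Real.sqrt n)
        (Real.sqrt lam + za * σ / Real.sqrt n)) ∧
    (∀ c₃ : ℝ, 0 < c₃ →
      c₃ = Real.sqrt lam + za * σ / Real.sqrt n - za * sigTilde lam σ c₃ / Real.sqrt n →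
      c₃ ∈ Set.Ioo (Real.sqrt lam) (Real.sqrt lam + (1/2) * za * σ / Real.sqrt n)) ∧
    (∀ c₄ : ℝ, 0 < c₄ →
      c₄ = Real.sqrt lam + za * σ / Real.sqrt n + za * sigTilde lam σ c₄ / Real.sqrt n →
      c₄ ∈ Set.Ioo (Real.sqrt lam + (3/2) * za * σ / Real.sqrt n)
        (Real.sqrt lam + 2 * za * σ / Real.sqrt n)) ∧
    (∀ c₁ c₂ c₃ c₄ : ℝ, 0 < c₁ → 0 < c₂ → 0 < c₃ → 0 < c₄ →
      c₁ = Real.sqrt lam - za * sigTilde lam σ c₁ / Real.sqrt n →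
      c₂ = Real.sqrt lam + za * sigTilde lam σ c₂ / Real.sqrt n →
      c₃ = Real.sqrt lam + za * σ / Real.sqrt n - za * sigTilde lam σ c₃ / Real.sqrt n →
      c₄ = Real.sqrt lam + za * σ / Real.sqrt n + za * sigTilde lam σ c₄ / Real.sqrt n →
      c₁ < c₃ ∧ c₃ < c₂ ∧ c₂ < c₄) := by
  have hPhi0 : Phi 0 = 1/2 := Phi_zero
  have hrn : (0:ℝ) < Real.sqrt n := Real.sqrt_pos.mpr (by exact_mod_cast Nat.lt_of_lt_of_le Nat.zero_lt_one hn)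
  have hs : 0 < Real.sqrt lam := Real.sqrt_pos.mpr hlam
  have hs2 : Real.sqrt lam ^ 2 = lam := Real.sq_sqrt hlam.le
  have hza_pos : 0 < za := by
    by_contra h
    push_neg at h
    have := Phi_mono (neg_nonneg.mpr h)
    rw [hza, hPhi0] at this
    linarith [hα.2]
  have hq_pos : 0 < za * σ / Real.sqrt n := by positivity
  -- zt > za / 2
  have hzt_half : za / 2 < zt := by
    by_contra h
    push_neg at h
    have := Phi_mono (neg_le_neg h)
    rw [hzt] at this
    linarith [hα.1]
  -- part (a)
  have partA : ∀ c₁ : ℝ, 0 < c₁ →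
      c₁ = Real.sqrt lam - za * sigTilde lam σ c₁ / Real.sqrt n →
      c₁ ∈ Set.Ioo ((za - zt) * σ / Real.sqrt n) (Real.sqrt lam) := by
    intro c hc hceq
    have hsp := sigTilde_pos (θ := c) hσ hlam hc
    constructor
    · by_contra h
      push_neg at h
      have h0 : (za - zt) * σ / Real.sqrt n < za / 2 * σ / Real.sqrt n := by
        gcongr ?_ * σ / Real.sqrt n
        linarith
      have h1 : za / 2 * σ / Real.sqrt n < Real.sqrt lam / 2 := by
        have : za * σ / Real.sqrt n / 2 < Real.sqrt lam / 2 := by linarith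
        linarith [this, (by ring : za / 2 * σ / Real.sqrt n = za * σ / Real.sqrt n / 2)]
      have hchalf : c < Real.sqrt lam / 2 := by linarith
      have hc2 : c ^ 2 < lam / 4 := by nlinarith
      have hsig : sigTilde lam σ c < σ / 4 := by
        have hb := sigTilde_le_bound (θ := c) hσ hlam hc
        have : c ^ 2 / lam * σ < σ / 4 := by
          rw [div_mul_eq_mul_div, div_lt_iff₀ hlam]
          nlinarith
        linarith
      have : za * sigTilde lam σ c / Real.sqrt n < za * (σ / 4) / Real.sqrt n := by
        gcongr
      have h4 : za * (σ / 4) / Real.sqrt n < Real.sqrt lam / 4 := by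
        have : za * σ / Real.sqrt n / 4 < Real.sqrt lam / 4 := by linarith
        linarith [this, (by ring : za * (σ / 4) / Real.sqrt n = za * σ / Real.sqrt n / 4)]
      have : Real.sqrt lam - Real.sqrt lam / 4 < c := by linarith
      linarith
    · have : 0 < za * sigTilde lam σ c / Real.sqrt n := by positivity
      linarith
  -- part (b)
  have partB : ∀ c : ℝ, 0 < c →
      c = Real.sqrt lam + za * sigTilde lam σ c / Real.sqrt n →
      c ∈ Set.Ioo (Real.sqrt lam + (1/2) * za * σ / Real.sqrt n)
        (Real.sqrt lam + za * σ / Real.sqrt n) := by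
    intro c hc hceq
    have hsp := sigTilde_pos (θ := c) hσ hlam hc
    have hgt : Real.sqrt lam < c := by
      have : 0 < za * sigTilde lam σ c / Real.sqrt n := by positivity
      linarith
    have hhalf := sigTilde_gt_half (θ := c) hσ hlam hgt
    have hlt := sigTilde_lt (θ := c) hσ hlam hc
    constructor
    · have : za * (σ / 2) / Real.sqrt n < za * sigTilde lam σ c / Real.sqrt n := by
        gcongr
      have heq : za * (σ / 2) / Real.sqrt n = (1/2) * za * σ / Real.sqrt n := by ring
      linarith
    · have : za * sigTilde lam σ c / Real.sqrt n < za * σ / Real.sqrt n := by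
        gcongr
      linarith
  -- part (c)
  have partC : ∀ c : ℝ, 0 < c →
      c = Real.sqrt lam + za * σ / Real.sqrt n - za * sigTilde lam σ c / Real.sqrt n →
      c ∈ Set.Ioo (Real.sqrt lam) (Real.sqrt lam + (1/2) * za * σ / Real.sqrt n) := by
    intro c hc hceq
    have hsp := sigTilde_pos (θ := c) hσ hlam hc
    have hlt := sigTilde_lt (θ := c) hσ hlam hc
    have hgt : Real.sqrt lam < c := by
      have : za * sigTilde lam σ c / Real.sqrt n < za * σ / Real.sqrt n := by gcongr
      linarith
    refine ⟨hgt, ?_⟩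
    have hhalf := sigTilde_gt_half (θ := c) hσ hlam hgt
    have : za * (σ / 2) / Real.sqrt n < za * sigTilde lam σ c / Real.sqrt n := by gcongr
    have heq : za * (σ / 2) / Real.sqrt n = (1/2) * za * σ / Real.sqrt n := by ring
    have hDC : za * σ / Real.sqrt n = 2 * ((1/2) * za * σ / Real.sqrt n) := by ring
    linarith
  -- part (d)
  have partD : ∀ c : ℝ, 0 < c →
      c = Real.sqrt lam + za * σ / Real.sqrt n + za * sigTilde lam σ c / Real.sqrt n →
      c ∈ Set.Ioo (Real.sqrt lam + (3/2) * za * σ / Real.sqrt n)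
        (Real.sqrt lam + 2 * za * σ / Real.sqrt n) := by
    intro c hc hceq
    have hsp := sigTilde_pos (θ := c) hσ hlam hc
    have hlt := sigTilde_lt (θ := c) hσ hlam hc
    have hgt : Real.sqrt lam < c := by
      have : 0 < za * sigTilde lam σ c / Real.sqrt n := by positivity
      linarith
    have hhalf := sigTilde_gt_half (θ := c) hσ hlam hgt
    constructor
    · have : za * (σ / 2) / Real.sqrt n < za * sigTilde lam σ c / Real.sqrt n := by gcongr
      have heq : za * (σ / 2) / Real.sqrt n = (1/2) * za * σ / Real.sqrt n := by ring
      have heq2 : (3/2 : ℝ) * za * σ / Real.sqrt n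
          = za * σ / Real.sqrt n + (1/2) * za * σ / Real.sqrt n := by ring
      linarith
    · have : za * sigTilde lam σ c / Real.sqrt n < za * σ / Real.sqrt n := by gcongr
      have heq : (2:ℝ) * za * σ / Real.sqrt n
          = za * σ / Real.sqrt n + za * σ / Real.sqrt n := by ring
      linarith
  refine ⟨partA, partB, partC, partD, ?_⟩
  intro c₁ c₂ c₃ c₄ h1 h2 h3 h4 e1 e2 e3 e4
  obtain ⟨-, a2⟩ := partA c₁ h1 e1
  obtain ⟨b1, b2⟩ := partB c₂ h2 e2
  obtain ⟨d1, d2⟩ := partC c₃ h3 e3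
  obtain ⟨f1, f2⟩ := partD c₄ h4 e4
  have hb : za * σ / Real.sqrt n = 2 * ((1/2) * za * σ / Real.sqrt n) := by ring
  have hb2 : (3/2) * za * σ / Real.sqrt n = 3 * ((1/2) * za * σ / Real.sqrt n) := by ring
  have hb3 : 0 < (1/2) * za * σ / Real.sqrt n := by positivity
  refine ⟨by linarith, by linarith, by linarith⟩
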